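/- Performance difference lemma: for any two policies π and π̃ in a finite discounted MDP with discount γ ∈ [0,1), η(π̃) − η(π) = E_{τ∼π̃}[Σ_{t=0}^∞ γ^t A_π(s_t, a_t)], where η denotes the expected discounted return and A_π the advantage function of π. -/

import Mathlib

set_option linter.unusedSectionVars false

noncomputable section

variable {S A : Type*} [Fintype S] [Fintype A] [DecidableEq S]

/-- The state distribution at time `t` induced by policy `π`, transition kernel `P`, and
initial distribution `μ`. -/
def stateDist (P : S → A → S → ℝ) (π : S → A → ℝ) (μ : S → ℝ) : ℕ → S → ℝ
  | 0 => μ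
  | (t + 1) => fun s' => ∑ s, ∑ a, stateDist P π μ t s * π s a * P s a s'

/-- Expected discounted return `η(π) = E_{τ∼π}[∑_t γ^t r(s_t,a_t)]` from initial
distribution `μ`. -/
def expReturn (γ : ℝ) (r : S → A → ℝ) (P : S → A → S → ℝ) (π : S → A → ℝ) (μ : S → ℝ) : ℝ :=
  ∑' t : ℕ, γ ^ t * ∑ s, ∑ a, stateDist P π μ t s * π s a * r s a

/-- Value function `V_π(s)`: expected discounted return starting from state `s`. -/
def valueV (γ : ℝ) (r : S → A → ℝ) (P : S → A → S → ℝ) (π : S → A → ℝ) (s : S) : ℝ :=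
  expReturn γ r P π (fun s' => if s' = s then 1 else 0)

/-- Action-value function `Q_π(s,a) = r(s,a) + γ ∑_{s'} P(s'|s,a) V_π(s')`. -/
def valueQ (γ : ℝ) (r : S → A → ℝ) (P : S → A → S → ℝ) (π : S → A → ℝ) (s : S) (a : A) : ℝ :=
  r s a + γ * ∑ s', P s a s' * valueV γ r P π s'

/-- Advantage function `A_π(s,a) = Q_π(s,a) − V_π(s)`. -/
def advantage (γ : ℝ) (r : S → A → ℝ) (P : S → A → S → ℝ) (π : S → A → ℝ) (s : S) (a : A) : ℝ :=
  valueQ γ r P π s a - valueV γ r P π s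

lemma sd_nonneg (P : S → A → S → ℝ) (hP : ∀ s a s', 0 ≤ P s a s')
    (π : S → A → ℝ) (hπ : ∀ s a, 0 ≤ π s a) (μ : S → ℝ) (hμ : ∀ s, 0 ≤ μ s) :
    ∀ t s, 0 ≤ stateDist P π μ t s
  | 0, s => hμ s
  | (t+1), s => Finset.sum_nonneg fun s' _ => Finset.sum_nonneg fun a _ =>
      mul_nonneg (mul_nonneg (sd_nonneg P hP π hπ μ hμ t s') (hπ s' a)) (hP s' a s)

lemma sd_sum (P : S → A → S → ℝ) (hP_sum : ∀ s a, ∑ s', P s a s' = 1)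
    (π : S → A → ℝ) (hπ_sum : ∀ s, ∑ a, π s a = 1)
    (μ : S → ℝ) (hμ_sum : ∑ s, μ s = 1) :
    ∀ t, ∑ s, stateDist P π μ t s = 1 := by
  intro t
  induction t with
  | zero => exact hμ_sum
  | succ t ih =>
    show ∑ s', ∑ s, ∑ a, stateDist P π μ t s * π s a * P s a s' = 1
    rw [Finset.sum_comm]
    calc ∑ s, ∑ s', ∑ a, stateDist P π μ t s * π s a * P s a s'
        = ∑ s, ∑ a, ∑ s', stateDist P π μ t s * π s a * P s a s' := by
          simp_rw [Finset.sum_comm (γ := A)]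
      _ = ∑ s, ∑ a, stateDist P π μ t s * π s a :=
          Finset.sum_congr rfl fun s _ => Finset.sum_congr rfl fun a _ => by
            rw [← Finset.mul_sum, hP_sum, mul_one]
      _ = ∑ s, stateDist P π μ t s :=
          Finset.sum_congr rfl fun s _ => by rw [← Finset.mul_sum, hπ_sum s, mul_one]
      _ = 1 := ih

lemma sd_linear (P : S → A → S → ℝ) (π : S → A → ℝ) (μ : S → ℝ) :
    ∀ t s, stateDist P π μ t s
      = ∑ s0, μ s0 * stateDist P π (fun x => if x = s0 then 1 else 0) t s := by
  intro t
  induction t with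
  | zero =>
    intro s
    show μ s = ∑ s0, μ s0 * if s = s0 then 1 else 0
    simp [mul_ite]
  | succ t ih =>
    intro s'
    show ∑ s, ∑ a, stateDist P π μ t s * π s a * P s a s' = _
    simp_rw [ih, Finset.sum_mul]
    conv_lhs => enter [2, s]; rw [Finset.sum_comm]
    conv_lhs => rw [Finset.sum_comm]
    show _ = ∑ s0, μ s0 * ∑ s, ∑ a, stateDist P π _ t s * π s a * P s a s'
    simp_rw [Finset.mul_sum]
    exact Finset.sum_congr rfl fun s0 _ => Finset.sum_congr rfl fun s _ =>
      Finset.sum_congr rfl fun a _ => by ring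





omit [DecidableEq S] in
lemma weighted1_abs_le (p : S → ℝ) (hp0 : ∀ s, 0 ≤ p s) (hp1 : ∑ s, p s = 1)
    (x : S → ℝ) (M : ℝ) (hx : ∀ s, |x s| ≤ M) : |∑ s, p s * x s| ≤ M := by
  calc |∑ s, p s * x s| ≤ ∑ s, |p s * x s| := Finset.abs_sum_le_sum_abs _ _
    _ ≤ ∑ s, p s * M := Finset.sum_le_sum fun s _ => by
        rw [abs_mul, abs_of_nonneg (hp0 s)]
        exact mul_le_mul_of_nonneg_left (hx s) (hp0 s)
    _ = M := by rw [← Finset.sum_mul, hp1, one_mul]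

omit [DecidableEq S] in
lemma weighted_abs_le (d : S → ℝ) (hd0 : ∀ s, 0 ≤ d s) (hd1 : ∑ s, d s = 1)
    (w : S → A → ℝ) (hw0 : ∀ s a, 0 ≤ w s a) (hw1 : ∀ s, ∑ a, w s a = 1)
    (x : S → A → ℝ) (M : ℝ) (hx : ∀ s a, |x s a| ≤ M) :
    |∑ s, ∑ a, d s * w s a * x s a| ≤ M := by
  have h : ∀ s, ∑ a, d s * w s a * x s a = d s * ∑ a, w s a * x s a := fun s => by
    rw [Finset.mul_sum]; exact Finset.sum_congr rfl fun a _ => by ring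
  simp_rw [h]
  refine weighted1_abs_le d hd0 hd1 _ M fun s => ?_
  exact weighted1_abs_le (w s) (hw0 s) (hw1 s) (x s) M (hx s)

lemma summable_geom_of_abs_le (γ : ℝ) (hγ0 : 0 ≤ γ) (hγ1 : γ < 1)
    (c : ℕ → ℝ) (M : ℝ) (hc : ∀ t, |c t| ≤ M) : Summable (fun t => γ ^ t * c t) := by
  refine Summable.of_norm_bounded (g := fun t => M * γ ^ t)
    ((summable_geometric_of_lt_one hγ0 hγ1).mul_left M) (fun t => ?_)
  rw [Real.norm_eq_abs, abs_mul, abs_pow, abs_of_nonneg hγ0, mul_comm]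
  exact mul_le_mul_of_nonneg_right (hc t) (pow_nonneg hγ0 t)

lemma abs_tsum_geom_le (γ : ℝ) (hγ0 : 0 ≤ γ) (hγ1 : γ < 1)
    (c : ℕ → ℝ) (M : ℝ) (hc : ∀ t, |c t| ≤ M) :
    |∑' t : ℕ, γ ^ t * c t| ≤ M / (1 - γ) := by
  have hsum : Summable (fun t => γ ^ t * c t) := summable_geom_of_abs_le γ hγ0 hγ1 c M hc
  have hgeo : Summable (fun t : ℕ => M * γ ^ t) :=
    (summable_geometric_of_lt_one hγ0 hγ1).mul_left M
  calc |∑' t : ℕ, γ ^ t * c t| ≤ ∑' t : ℕ, |γ ^ t * c t| := by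
        have h := norm_tsum_le_tsum_norm (f := fun t => γ ^ t * c t)
          (by simp only [Real.norm_eq_abs]; exact hsum.abs)
        simp only [Real.norm_eq_abs] at h
        exact h
    _ ≤ ∑' t : ℕ, M * γ ^ t := by
        refine Summable.tsum_le_tsum (fun t => ?_) hsum.abs hgeo
        rw [abs_mul, abs_pow, abs_of_nonneg hγ0, mul_comm]
        exact mul_le_mul_of_nonneg_right (hc t) (pow_nonneg hγ0 t)
    _ = M / (1 - γ) := by
        rw [tsum_mul_left, tsum_geometric_of_lt_one hγ0 hγ1, div_eq_mul_inv]

omit [DecidableEq S] [Fintype A] in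
lemma abs_r_le (r : S → A → ℝ) [Fintype A] : ∀ s a, |r s a| ≤ ∑ s, ∑ a, |r s a| := by
  intro s a
  calc |r s a| ≤ ∑ a, |r s a| :=
        Finset.single_le_sum (f := fun a => |r s a|) (fun a _ => abs_nonneg _)
          (Finset.mem_univ a)
    _ ≤ ∑ s, ∑ a, |r s a| :=
        Finset.single_le_sum (f := fun s => ∑ a, |r s a|)
          (fun s _ => Finset.sum_nonneg fun a _ => abs_nonneg _) (Finset.mem_univ s)

lemma delta_nonneg (s0 : S) : ∀ s, (0:ℝ) ≤ if s = s0 then 1 else 0 := fun s => by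
  split <;> norm_num

lemma delta_sum (s0 : S) : ∑ s, (if s = s0 then (1:ℝ) else 0) = 1 := by simp

lemma valueV_abs_le (γ : ℝ) (hγ0 : 0 ≤ γ) (hγ1 : γ < 1) (r : S → A → ℝ)
    (P : S → A → S → ℝ) (hP_nonneg : ∀ s a s', 0 ≤ P s a s') (hP_sum : ∀ s a, ∑ s', P s a s' = 1)
    (π : S → A → ℝ) (hπ_nonneg : ∀ s a, 0 ≤ π s a) (hπ_sum : ∀ s, ∑ a, π s a = 1) (s0 : S) :
    |valueV γ r P π s0| ≤ (∑ s, ∑ a, |r s a|) / (1 - γ) := by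
  refine abs_tsum_geom_le γ hγ0 hγ1 _ _ (fun t => ?_)
  exact weighted_abs_le _
    (sd_nonneg P hP_nonneg π hπ_nonneg _ (delta_nonneg s0) t)
    (sd_sum P hP_sum π hπ_sum _ (delta_sum s0) t)
    π hπ_nonneg hπ_sum r _ (abs_r_le r)

lemma expReturn_eq_sum_V (γ : ℝ) (hγ0 : 0 ≤ γ) (hγ1 : γ < 1) (r : S → A → ℝ)
    (P : S → A → S → ℝ) (hP_nonneg : ∀ s a s', 0 ≤ P s a s') (hP_sum : ∀ s a, ∑ s', P s a s' = 1)
    (π : S → A → ℝ) (hπ_nonneg : ∀ s a, 0 ≤ π s a) (hπ_sum : ∀ s, ∑ a, π s a = 1)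
    (μ : S → ℝ) :
    expReturn γ r P π μ = ∑ s0, μ s0 * valueV γ r P π s0 := by
  have key : ∀ t, γ ^ t * ∑ s, ∑ a, stateDist P π μ t s * π s a * r s a
      = ∑ s0, μ s0 * (γ ^ t * ∑ s, ∑ a,
          stateDist P π (fun x => if x = s0 then 1 else 0) t s * π s a * r s a) := by
    intro t
    have h1 : ∑ s, ∑ a, stateDist P π μ t s * π s a * r s a
        = ∑ s0, μ s0 * ∑ s, ∑ a,
            stateDist P π (fun x => if x = s0 then 1 else 0) t s * π s a * r s a := by
      simp_rw [sd_linear P π μ t, Finset.sum_mul]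
      conv_lhs => enter [2, s]; rw [Finset.sum_comm]
      conv_lhs => rw [Finset.sum_comm]
      simp_rw [Finset.mul_sum]
      exact Finset.sum_congr rfl fun s0 _ => Finset.sum_congr rfl fun s _ =>
        Finset.sum_congr rfl fun a _ => by ring
    rw [h1, Finset.mul_sum]
    exact Finset.sum_congr rfl fun s0 _ => by ring
  unfold expReturn
  rw [tsum_congr key]
  rw [Summable.tsum_finsetSum (fun s0 _ => ?_)]
  · exact Finset.sum_congr rfl fun s0 _ => by
      rw [tsum_mul_left]; rfl
  · refine Summable.mul_left _ (summable_geom_of_abs_le γ hγ0 hγ1 _ (∑ s, ∑ a, |r s a|) (fun t => ?_))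
    exact weighted_abs_le _
      (sd_nonneg P hP_nonneg π hπ_nonneg _ (delta_nonneg s0) t)
      (sd_sum P hP_sum π hπ_sum _ (delta_sum s0) t)
      π hπ_nonneg hπ_sum r _ (abs_r_le r)

lemma sd_zero (P : S → A → S → ℝ) (π : S → A → ℝ) (μ : S → ℝ) (s : S) :
    stateDist P π μ 0 s = μ s := rfl

lemma sd_succ (P : S → A → S → ℝ) (π : S → A → ℝ) (μ : S → ℝ) (t : ℕ) (s' : S) :
    stateDist P π μ (t+1) s' = ∑ s, ∑ a, stateDist P π μ t s * π s a * P s a s' := rfl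


/-- Performance difference lemma: for any two policies `π` and `π̃`,
`η(π̃) − η(π) = E_{τ∼π̃}[∑_t γ^t A_π(s_t,a_t)]`. -/
theorem stmt7
    (γ : ℝ) (hγ0 : 0 ≤ γ) (hγ1 : γ < 1)
    (r : S → A → ℝ)
    (P : S → A → S → ℝ) (hP_nonneg : ∀ s a s', 0 ≤ P s a s') (hP_sum : ∀ s a, ∑ s', P s a s' = 1)
    (μ : S → ℝ) (hμ_nonneg : ∀ s, 0 ≤ μ s) (hμ_sum : ∑ s, μ s = 1)
    (π πt : S → A → ℝ)
    (hπ_nonneg : ∀ s a, 0 ≤ π s a) (hπ_sum : ∀ s, ∑ a, π s a = 1)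
    (hπt_nonneg : ∀ s a, 0 ≤ πt s a) (hπt_sum : ∀ s, ∑ a, πt s a = 1) :
    expReturn γ r P πt μ - expReturn γ r P π μ
      = ∑' t : ℕ, γ ^ t * ∑ s, ∑ a, stateDist P πt μ t s * πt s a * advantage γ r P π s a := by
  have h1γ : 0 < 1 - γ := by linarith
  set Mr := ∑ s, ∑ a, |r s a| with hMr
  have hMr0 : 0 ≤ Mr :=
    Finset.sum_nonneg fun s _ => Finset.sum_nonneg fun a _ => abs_nonneg _
  set MV := Mr / (1 - γ) with hMVdef
  have hMV0 : 0 ≤ MV := div_nonneg hMr0 h1γ.le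
  set V := valueV γ r P π with hVdef
  have hVb : ∀ s, |V s| ≤ MV := fun s =>
    valueV_abs_le γ hγ0 hγ1 r P hP_nonneg hP_sum π hπ_nonneg hπ_sum s
  set d := stateDist P πt μ with hddef
  have hd0 : ∀ t s, 0 ≤ d t s := sd_nonneg P hP_nonneg πt hπt_nonneg μ hμ_nonneg
  have hd1 : ∀ t, ∑ s, d t s = 1 := sd_sum P hP_sum πt hπt_sum μ hμ_sum
  set u : ℕ → ℝ := fun t => γ ^ t * ∑ s, ∑ a, d t s * πt s a * r s a with hudef
  set g : ℕ → ℝ := fun t => γ ^ t * ∑ s, d t s * V s with hgdef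
  set f : ℕ → ℝ := fun t => γ ^ t * ∑ s, ∑ a, d t s * πt s a * advantage γ r P π s a
    with hfdef
  -- advantage is bounded
  have hAdv : ∀ s a, |advantage γ r P π s a| ≤ Mr + MV + MV := by
    intro s a
    have hPV : |∑ s', P s a s' * V s'| ≤ MV :=
      weighted1_abs_le (P s a) (hP_nonneg s a) (hP_sum s a) V MV hVb
    have hγPV : |γ * ∑ s', P s a s' * V s'| ≤ MV := by
      rw [abs_mul, abs_of_nonneg hγ0]
      calc γ * |∑ s', P s a s' * V s'| ≤ 1 * MV :=
            mul_le_mul hγ1.le hPV (abs_nonneg _) zero_le_one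
        _ = MV := one_mul MV
    have heq : advantage γ r P π s a
        = r s a + γ * ∑ s', P s a s' * V s' + (-(V s)) := by
      simp only [advantage, valueQ, hVdef]; ring
    rw [heq]
    calc |r s a + γ * ∑ s', P s a s' * V s' + (-(V s))|
        ≤ |r s a| + |γ * ∑ s', P s a s' * V s'| + |(-(V s))| := abs_add_three _ _ _
      _ ≤ Mr + MV + MV := by
          rw [abs_neg]
          exact add_le_add (add_le_add (abs_r_le r s a) hγPV) (hVb s)
  -- summability
  have hub : Summable u :=
    summable_geom_of_abs_le γ hγ0 hγ1 _ Mr fun t =>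
      weighted_abs_le (d t) (hd0 t) (hd1 t) πt hπt_nonneg hπt_sum r Mr (abs_r_le r)
  have hfb : Summable f :=
    summable_geom_of_abs_le γ hγ0 hγ1 _ (Mr + MV + MV) fun t =>
      weighted_abs_le (d t) (hd0 t) (hd1 t) πt hπt_nonneg hπt_sum _ _ hAdv
  -- step identity
  have hstep : ∀ t, ∑ s', d (t+1) s' * V s'
      = ∑ s, ∑ a, d t s * πt s a * ∑ s', P s a s' * V s' := by
    intro t
    simp_rw [hddef, sd_succ, Finset.sum_mul]
    rw [Finset.sum_comm]
    refine Finset.sum_congr rfl fun s _ => ?_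
    rw [Finset.sum_comm]
    refine Finset.sum_congr rfl fun a _ => ?_
    rw [Finset.mul_sum]
    exact Finset.sum_congr rfl fun s' _ => by ring
  -- expectation of V under d t
  have h3 : ∀ t, ∑ s, d t s * V s = ∑ s, ∑ a, d t s * πt s a * V s := by
    intro t
    refine Finset.sum_congr rfl fun s _ => ?_
    calc d t s * V s = (∑ a, πt s a) * (d t s * V s) := by rw [hπt_sum s, one_mul]
      _ = ∑ a, d t s * πt s a * V s := by
          rw [Finset.sum_mul]
          exact Finset.sum_congr rfl fun a _ => by ring
  -- key telescoping identity
  have key : ∀ t, f t = u t + (g (t+1) - g t) := by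
    intro t
    have hexp : ∑ s, ∑ a, d t s * πt s a * advantage γ r P π s a
        = (∑ s, ∑ a, d t s * πt s a * r s a)
          + γ * (∑ s, ∑ a, d t s * πt s a * ∑ s', P s a s' * V s')
          - (∑ s, ∑ a, d t s * πt s a * V s) := by
      simp_rw [Finset.mul_sum, ← Finset.sum_add_distrib, ← Finset.sum_sub_distrib]
      refine Finset.sum_congr rfl fun s _ => Finset.sum_congr rfl fun a _ => ?_
      have : advantage γ r P π s a = r s a + γ * ∑ s', P s a s' * V s' - V s := by
        simp only [advantage, valueQ, hVdef]
      rw [this,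
        show ∑ x, γ * (d t s * πt s a * (P s a x * V x))
            = γ * (d t s * πt s a) * ∑ x, P s a x * V x from by
          rw [Finset.mul_sum]; exact Finset.sum_congr rfl fun x _ => by ring]
      ring
    show γ ^ t * ∑ s, ∑ a, d t s * πt s a * advantage γ r P π s a
        = u t + (g (t+1) - g t)
    rw [hexp, hudef, hgdef]
    simp only
    rw [hstep t, h3 t]
    ring
  -- series of telescoping terms
  have hteleS : Summable (fun t => g (t+1) - g t) :=
    (hfb.sub hub).congr fun t => by rw [key t]; ring
  have hgb : ∀ t, ‖g t‖ ≤ γ ^ t * MV := by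
    intro t
    rw [Real.norm_eq_abs, hgdef]
    simp only
    rw [abs_mul, abs_pow, abs_of_nonneg hγ0]
    exact mul_le_mul_of_nonneg_left
      (weighted1_abs_le (d t) (hd0 t) (hd1 t) V MV hVb) (pow_nonneg hγ0 t)
  have hg0 : Filter.Tendsto g Filter.atTop (nhds 0) := by
    refine squeeze_zero_norm hgb ?_
    have := (tendsto_pow_atTop_nhds_zero_of_lt_one hγ0 hγ1).mul_const MV
    simpa using this
  have hpartial : Filter.Tendsto (fun N => ∑ t ∈ Finset.range N, (g (t+1) - g t))
      Filter.atTop (nhds (0 - g 0)) := by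
    have heq : (fun N => ∑ t ∈ Finset.range N, (g (t+1) - g t)) = fun N => g N - g 0 :=
      funext fun N => Finset.sum_range_sub g N
    rw [heq]
    exact hg0.sub_const (g 0)
  have hts : ∑' t : ℕ, (g (t+1) - g t) = -(g 0) := by
    have h1 := hteleS.hasSum.tendsto_sum_nat
    have h2 := tendsto_nhds_unique h1 hpartial
    rw [h2]; ring
  -- put it together
  have hηπ : expReturn γ r P π μ = g 0 := by
    rw [expReturn_eq_sum_V γ hγ0 hγ1 r P hP_nonneg hP_sum π hπ_nonneg hπ_sum μ, hgdef]
    simp only [pow_zero, one_mul]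
    exact Finset.sum_congr rfl fun s _ => by rw [hddef, sd_zero, hVdef]
  have hηt : expReturn γ r P πt μ = ∑' t, u t := rfl
  have : ∑' t, f t = ∑' t, u t + ∑' t : ℕ, (g (t+1) - g t) := by
    rw [tsum_congr key]
    exact Summable.tsum_add hub hteleS
  rw [this, hts, hηπ, hηt]
  ring

end
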